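/- Let a ∈ ℂ, β ∈ ℂ with β² + i·conj(a) = 1 (respectively β² − i·conj(a) = 1), and η > 0. Define the ℂ³-valued function W^±(t,x,y) = exp(iβηt ± iyη² − η²x²/2)(W₀ + ηx W₁) with W₀ = (1,0,0)ᵀ and W₁ = (0, −i(1 ∓ i·conj(a))/β, ∓1/β)ᵀ (assuming β ≠ 0). Then L_a* W^± = 0, where L_a* = −∂_t − A*∂_x − x B*∂_y with A = [[0,1,0],[1,0,0],[0,0,0]] and B = [[0,a,1],[−a,0,0],[1+a²,0,0]]. -/

import Mathlib

noncomputable section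

open Complex

/-- `∂_t` for curried functions of `(t,x,y)`. -/
def dT (f : ℝ → ℝ → ℝ → ℂ) (t x y : ℝ) : ℂ := deriv (fun s => f s x y) t

/-- `∂_x` for curried functions of `(t,x,y)`. -/
def dX (f : ℝ → ℝ → ℝ → ℂ) (t x y : ℝ) : ℂ := deriv (fun s => f t s y) x

/-- `∂_y` for curried functions of `(t,x,y)`. -/
def dY (f : ℝ → ℝ → ℝ → ℂ) (t x y : ℝ) : ℂ := deriv (fun s => f t x s) y

/-- The scalar exponential factor of `W^±`. -/
def Wexp (β ε : ℂ) (η : ℝ) (t x y : ℝ) : ℂ :=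
  Complex.exp (I * β * (η : ℂ) * (t : ℂ) + ε * I * (η : ℂ) ^ 2 * (y : ℂ)
    - (η : ℂ) ^ 2 * (x : ℂ) ^ 2 / 2)

/-- First component of `W^± = exp(iβηt ± iyη² − η²x²/2)(W₀ + ηx W₁)`. -/
def W1 (β ε : ℂ) (η : ℝ) (t x y : ℝ) : ℂ := Wexp β ε η t x y

/-- Second component of `W^±`. -/
def W2 (a β ε : ℂ) (η : ℝ) (t x y : ℝ) : ℂ :=
  Wexp β ε η t x y * ((η : ℂ) * (x : ℂ)) * (-I * (1 - ε * I * (starRingEnd ℂ a)) / β)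

/-- Third component of `W^±`. -/
def W3 (a β ε : ℂ) (η : ℝ) (t x y : ℝ) : ℂ :=
  Wexp β ε η t x y * ((η : ℂ) * (x : ℂ)) * (-ε / β)

lemma expDeriv1 (b c : ℂ) (t : ℝ) :
    HasDerivAt (fun s : ℝ => Complex.exp (b * s + c)) (b * Complex.exp (b * t + c)) t := by
  have h : HasDerivAt (fun z : ℂ => Complex.exp (b * z + c))
      (b * Complex.exp (b * t + c)) (t : ℂ) := by
    have := (((hasDerivAt_id ((t:ℝ):ℂ)).const_mul b).add_const c).cexp
    simp only [id_eq] at this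
    exact this.congr_deriv (by ring)
  exact h.comp_ofReal

lemma expDeriv2 (c d k : ℂ) (t : ℝ) :
    HasDerivAt (fun s : ℝ => Complex.exp (c - d * s ^ 2) * (k * s))
      (Complex.exp (c - d * t ^ 2) * (k - 2 * d * k * t ^ 2)) t := by
  have h1 : HasDerivAt (fun z : ℂ => Complex.exp (c - d * z ^ 2))
      (Complex.exp (c - d * ((t:ℝ):ℂ) ^ 2) * -(d * (2 * ((t:ℝ):ℂ) ^ 1))) ((t:ℝ):ℂ) :=
    (((hasDerivAt_pow 2 _).const_mul d).const_sub c).cexp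
  have h2 : HasDerivAt (fun z : ℂ => k * z) (k * 1) ((t:ℝ):ℂ) :=
    (hasDerivAt_id _).const_mul k
  have := (h1.mul h2).comp_ofReal
  exact this.congr_deriv (by ring)

lemma expDeriv2' (c d : ℂ) (t : ℝ) :
    HasDerivAt (fun s : ℝ => Complex.exp (c - d * s ^ 2))
      (Complex.exp (c - d * t ^ 2) * (-(2 * d * t))) t := by
  have h1 : HasDerivAt (fun z : ℂ => Complex.exp (c - d * z ^ 2))
      (Complex.exp (c - d * ((t:ℝ):ℂ) ^ 2) * -(d * (2 * ((t:ℝ):ℂ) ^ 1))) ((t:ℝ):ℂ) :=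
    (((hasDerivAt_pow 2 _).const_mul d).const_sub c).cexp
  have := h1.comp_ofReal
  convert this using 1; ring

/-- `L_a^* W^± = 0`, where `L_a^* = −∂_t − A^*∂_x − xB^*∂_y`. -/
theorem stmt_12 (a β ε : ℂ) (η : ℝ) (hη : 0 < η) (hβ : β ≠ 0) (hε : ε = 1 ∨ ε = -1)
    (h : β ^ 2 + ε * I * (starRingEnd ℂ a) = 1) :
    ∀ t x y : ℝ,
      -- first row of `−∂_t − A^*∂_x − xB^*∂_y` applied to `(W1, W2, W3)`
      (-dT (W1 β ε η) t x y - dX (W2 a β ε η) t x y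
        - (x : ℂ) * (-(starRingEnd ℂ a) * dY (W2 a β ε η) t x y
            + (1 + (starRingEnd ℂ a) ^ 2) * dY (W3 a β ε η) t x y) = 0) ∧
      -- second row
      (-dT (W2 a β ε η) t x y - dX (W1 β ε η) t x y
        - (x : ℂ) * (starRingEnd ℂ a) * dY (W1 β ε η) t x y = 0) ∧
      -- third row
      (-dT (W3 a β ε η) t x y - (x : ℂ) * dY (W1 β ε η) t x y = 0) := by
  intro t x y
  set A := starRingEnd ℂ a with hA
  set E := Wexp β ε η t x y with hEdef
  have hexp : E = Complex.exp (I * β * (η : ℂ) * (t : ℂ) + ε * I * (η : ℂ) ^ 2 * (y : ℂ)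
      - (η : ℂ) ^ 2 * (x : ℂ) ^ 2 / 2) := by rw [hEdef, Wexp]
  -- t-derivatives
  have hT1 : dT (W1 β ε η) t x y = I * β * η * E := by
    have hfun : (fun s : ℝ => W1 β ε η s x y)
        = fun s : ℝ => Complex.exp ((I * β * (η : ℂ)) * (s : ℂ)
            + (ε * I * (η : ℂ) ^ 2 * (y : ℂ) - (η : ℂ) ^ 2 * (x : ℂ) ^ 2 / 2)) := by
      funext s; simp only [W1, Wexp]; ring_nf
    rw [dT, hfun, (expDeriv1 _ _ _).deriv, hexp]; ring_nf
  have hT2 : dT (W2 a β ε η) t x y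
      = I * β * η * E * (((η : ℂ) * (x : ℂ)) * (-I * (1 - ε * I * A) / β)) := by
    have hfun : (fun s : ℝ => W2 a β ε η s x y)
        = fun s : ℝ => Complex.exp ((I * β * (η : ℂ)) * (s : ℂ)
            + (ε * I * (η : ℂ) ^ 2 * (y : ℂ) - (η : ℂ) ^ 2 * (x : ℂ) ^ 2 / 2))
            * (((η : ℂ) * (x : ℂ)) * (-I * (1 - ε * I * A) / β)) := by
      funext s; simp only [W2, Wexp, ← hA]; ring_nf
    rw [dT, hfun, ((expDeriv1 _ _ _).mul_const _).deriv, hexp]; ring_nf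
  have hT3 : dT (W3 a β ε η) t x y
      = I * β * η * E * (((η : ℂ) * (x : ℂ)) * (-ε / β)) := by
    have hfun : (fun s : ℝ => W3 a β ε η s x y)
        = fun s : ℝ => Complex.exp ((I * β * (η : ℂ)) * (s : ℂ)
            + (ε * I * (η : ℂ) ^ 2 * (y : ℂ) - (η : ℂ) ^ 2 * (x : ℂ) ^ 2 / 2))
            * (((η : ℂ) * (x : ℂ)) * (-ε / β)) := by
      funext s; simp only [W3, Wexp]; ring_nf
    rw [dT, hfun, ((expDeriv1 _ _ _).mul_const _).deriv, hexp]; ring_nf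
  -- x-derivatives
  have hX1 : dX (W1 β ε η) t x y = -((η : ℂ) ^ 2 * (x : ℂ)) * E := by
    have hfun : (fun s : ℝ => W1 β ε η t s y)
        = fun s : ℝ => Complex.exp ((I * β * (η : ℂ) * (t : ℂ)
            + ε * I * (η : ℂ) ^ 2 * (y : ℂ)) - ((η : ℂ) ^ 2 / 2) * (s : ℂ) ^ 2) := by
      funext s; simp only [W1, Wexp]; ring_nf
    rw [dX, hfun, (expDeriv2' _ _ _).deriv, hexp]; ring_nf
  have hX2 : dX (W2 a β ε η) t x y
      = E * ((η : ℂ) * (-I * (1 - ε * I * A) / β)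
          - (η : ℂ) ^ 3 * (-I * (1 - ε * I * A) / β) * (x : ℂ) ^ 2) := by
    have hfun : (fun s : ℝ => W2 a β ε η t s y)
        = fun s : ℝ => Complex.exp ((I * β * (η : ℂ) * (t : ℂ)
            + ε * I * (η : ℂ) ^ 2 * (y : ℂ)) - ((η : ℂ) ^ 2 / 2) * (s : ℂ) ^ 2)
            * (((η : ℂ) * (-I * (1 - ε * I * A) / β)) * (s : ℂ)) := by
      funext s; simp only [W2, Wexp, ← hA]; ring_nf
    rw [dX, hfun, (expDeriv2 _ _ _ _).deriv, hexp]; ring_nf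
  -- y-derivatives
  have hY1 : dY (W1 β ε η) t x y = ε * I * (η : ℂ) ^ 2 * E := by
    have hfun : (fun s : ℝ => W1 β ε η t x s)
        = fun s : ℝ => Complex.exp ((ε * I * (η : ℂ) ^ 2) * (s : ℂ)
            + (I * β * (η : ℂ) * (t : ℂ) - (η : ℂ) ^ 2 * (x : ℂ) ^ 2 / 2)) := by
      funext s; simp only [W1, Wexp]; ring_nf
    rw [dY, hfun, (expDeriv1 _ _ _).deriv, hexp]; ring_nf
  have hY2 : dY (W2 a β ε η) t x y
      = ε * I * (η : ℂ) ^ 2 * E * (((η : ℂ) * (x : ℂ)) * (-I * (1 - ε * I * A) / β)) := by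
    have hfun : (fun s : ℝ => W2 a β ε η t x s)
        = fun s : ℝ => Complex.exp ((ε * I * (η : ℂ) ^ 2) * (s : ℂ)
            + (I * β * (η : ℂ) * (t : ℂ) - (η : ℂ) ^ 2 * (x : ℂ) ^ 2 / 2))
            * (((η : ℂ) * (x : ℂ)) * (-I * (1 - ε * I * A) / β)) := by
      funext s; simp only [W2, Wexp, ← hA]; ring_nf
    rw [dY, hfun, ((expDeriv1 _ _ _).mul_const _).deriv, hexp]; ring_nf
  have hY3 : dY (W3 a β ε η) t x y
      = ε * I * (η : ℂ) ^ 2 * E * (((η : ℂ) * (x : ℂ)) * (-ε / β)) := by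
    have hfun : (fun s : ℝ => W3 a β ε η t x s)
        = fun s : ℝ => Complex.exp ((ε * I * (η : ℂ) ^ 2) * (s : ℂ)
            + (I * β * (η : ℂ) * (t : ℂ) - (η : ℂ) ^ 2 * (x : ℂ) ^ 2 / 2))
            * (((η : ℂ) * (x : ℂ)) * (-ε / β)) := by
      funext s; simp only [W3, Wexp]; ring_nf
    rw [dY, hfun, ((expDeriv1 _ _ _).mul_const _).deriv, hexp]; ring_nf
  rcases hε with rfl | rfl
  · have ha : A = -I * (1 - β ^ 2) := by linear_combination -I * h + A * Complex.I_sq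
    refine ⟨?_, ?_, ?_⟩
    · rw [hT1, hX2, hY2, hY3, ha]; field_simp
      simp only [Complex.I_sq]; ring
    · rw [hT2, hX1, hY1, ha]; field_simp
      simp only [Complex.I_sq]; ring
    · rw [hT3, hY1]; field_simp; ring
  · have ha : A = I * (1 - β ^ 2) := by linear_combination I * h + A * Complex.I_sq
    refine ⟨?_, ?_, ?_⟩
    · rw [hT1, hX2, hY2, hY3, ha]; field_simp
      simp only [Complex.I_sq]; ring
    · rw [hT2, hX1, hY1, ha]; field_simp
      simp only [Complex.I_sq]; ring
    · rw [hT3, hY1]; field_simp; ring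

end
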